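/- Every even cycle C_{2k} (k ≥ 1) is Sidorenko: for every graph H, t(C_{2k}, H) ≥ t(K₂, H)^{2k}. -/

import Mathlib

open Finset
open scoped Classical

/-- The homomorphism density `t(G, H)`: the probability that a uniformly random map
`V(G) → V(H)` is a graph homomorphism. -/
noncomputable def homDensity {V W : Type} [Fintype V] [Fintype W]
    (G : SimpleGraph V) (H : SimpleGraph W) : ℝ :=
  ((Finset.univ.filter
      (fun f : V → W => ∀ ⦃u v : V⦄, G.Adj u v → H.Adj (f u) (f v))).card : ℝ) /
    (Fintype.card W : ℝ) ^ (Fintype.card V)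

namespace EvenCycleSidorenko

open Matrix

variable {W : Type} [Fintype W]

lemma pow_apply_eq_sum (M : Matrix W W ℝ) : ∀ (m : ℕ) (a b : W),
    (M ^ m) a b = ∑ g : Fin (m+1) → W,
      if g 0 = a ∧ g (Fin.last m) = b then ∏ i : Fin m, M (g i.castSucc) (g i.succ) else 0 := by
  intro m
  induction m with
  | zero =>
    intro a b
    rw [pow_zero, Matrix.one_apply,
      Fintype.sum_equiv (Equiv.funUnique (Fin 1) W)
        (fun g : Fin 1 → W =>
          if g 0 = a ∧ g (Fin.last 0) = b then ∏ i : Fin 0, M (g i.castSucc) (g i.succ) else 0)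
        (fun w : W => if w = a ∧ w = b then 1 else 0) (fun g => by simp [Fin.last])]
    simp only [ite_and]
    rw [Finset.sum_ite_eq' univ a (fun w => if w = b then (1:ℝ) else 0)]
    simp [eq_comm]
  | succ m ih =>
    intro a b
    have hequiv := Fintype.sum_equiv (Fin.consEquiv (fun _ : Fin (m+2) => W))
        (fun p : W × (Fin (m+1) → W) =>
          if p.1 = a ∧ p.2 (Fin.last m) = b then
            M p.1 (p.2 0) * ∏ i : Fin m, M (p.2 i.castSucc) (p.2 i.succ) else 0)
        (fun g : Fin (m+2) → W =>
          if g 0 = a ∧ g (Fin.last (m+1)) = b then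
            ∏ i : Fin (m+1), M (g i.castSucc) (g i.succ) else 0)
        ?_
    · rw [pow_succ', Matrix.mul_apply, ← hequiv, Fintype.sum_prod_type,
        Finset.sum_eq_single_of_mem a (mem_univ a)
          (fun c _ hc => Finset.sum_eq_zero (fun g _ => by simp [hc]))]
      simp only [true_and]
      have hLHS : ∀ j : W, M a j * (M ^ m) j b
          = ∑ g : Fin (m+1) → W, (if g 0 = j ∧ g (Fin.last m) = b then
              M a j * ∏ i : Fin m, M (g i.castSucc) (g i.succ) else 0) := by
        intro j
        rw [ih j b, Finset.mul_sum]
        exact Finset.sum_congr rfl (fun g _ => by split <;> simp)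
      rw [Finset.sum_congr rfl (fun j _ => hLHS j), Finset.sum_comm]
      apply Finset.sum_congr rfl
      intro g _
      rw [Finset.sum_eq_single_of_mem (g 0) (mem_univ _)
        (fun c _ hc => by simp [Ne.symm hc])]
      by_cases hb : g (Fin.last m) = b <;> simp [hb]
    · rintro ⟨c, g⟩
      simp only [Fin.consEquiv_apply]
      have h1 : Fin.cons (α := fun _ => W) c g 0 = c := rfl
      have hlast : Fin.cons (α := fun _ => W) c g (Fin.last (m+1)) = g (Fin.last m) := by
        rw [← Fin.succ_last, Fin.cons_succ]
      rw [h1, hlast]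
      by_cases hyp : c = a ∧ g (Fin.last m) = b
      · rw [if_pos hyp, if_pos hyp, Fin.prod_univ_succ]
        congr 1
      · rw [if_neg hyp, if_neg hyp]

lemma sum_snoc {m : ℕ} (G : (Fin (m+1) → W) → ℝ) :
    ∑ g : Fin (m+1) → W, G g = ∑ p : W × (Fin m → W), G (Fin.snoc p.2 p.1) :=
  (Fintype.sum_equiv (Fin.snocEquiv (fun _ => W)) _ G
    (fun p => by congr 1)).symm

lemma snoc_succ_eq (m : ℕ) (f : Fin (m+1) → W) (i : Fin (m+1)) :
    Fin.snoc (α := fun _ => W) f (f 0) i.succ = f (i + 1) := by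
  induction i using Fin.lastCases with
  | last =>
    rw [Fin.succ_last, Fin.snoc_last, Fin.last_add_one]
  | cast j =>
    rw [Fin.succ_castSucc, Fin.snoc_castSucc, Fin.coeSucc_eq_succ]

lemma trace_pow_eq_sum (M : Matrix W W ℝ) (m : ℕ) :
    (M ^ (m+1)).trace = ∑ f : Fin (m+1) → W, ∏ i : Fin (m+1), M (f i) (f (i + 1)) := by
  rw [Matrix.trace]
  have h1 : ∀ a : W, (M ^ (m+1)).diag a
      = ∑ g : Fin (m+2) → W,
        if g 0 = a ∧ g (Fin.last (m+1)) = a then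
          ∏ i : Fin (m+1), M (g i.castSucc) (g i.succ) else 0 := by
    intro a; exact pow_apply_eq_sum M (m+1) a a
  rw [Finset.sum_congr rfl (fun a _ => h1 a), Finset.sum_comm]
  have h2 : ∀ g : Fin (m+2) → W,
      (∑ a : W, if g 0 = a ∧ g (Fin.last (m+1)) = a then
        ∏ i : Fin (m+1), M (g i.castSucc) (g i.succ) else 0)
      = (if g (Fin.last (m+1)) = g 0 then
          ∏ i : Fin (m+1), M (g i.castSucc) (g i.succ) else 0) := by
    intro g
    rw [Finset.sum_eq_single_of_mem (g 0) (mem_univ _)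
      (fun c _ hc => by simp [Ne.symm hc])]
    simp
  rw [Finset.sum_congr rfl (fun g _ => h2 g),
    sum_snoc (fun g : Fin (m+2) → W =>
      if g (Fin.last (m+1)) = g 0 then
        ∏ i : Fin (m+1), M (g i.castSucc) (g i.succ) else 0),
    Fintype.sum_prod_type, Finset.sum_comm]
  apply Finset.sum_congr rfl
  intro f _
  have h0 : ∀ w : W, (Fin.snoc (α := fun _ => W) f w) 0 = f 0 := fun w => by
    rw [show (0 : Fin (m+2)) = Fin.castSucc 0 from rfl, Fin.snoc_castSucc]
  rw [Finset.sum_eq_single_of_mem (f 0) (mem_univ _)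
    (fun w _ hw => by rw [if_neg]; rw [Fin.snoc_last, h0]; exact hw)]
  rw [if_pos (by rw [Fin.snoc_last, h0])]
  apply Finset.prod_congr rfl
  intro i _
  rw [Fin.snoc_castSucc, snoc_succ_eq]

noncomputable def Fw (A : Matrix W W ℝ) (j : ℕ) : ℝ :=
  ((A ^ j).mulVec (fun _ => 1)) ⬝ᵥ (fun _ => 1)

lemma dot_pow (A : Matrix W W ℝ) (hA : A.IsSymm) (a b : ℕ) :
    ((A ^ a).mulVec (fun _ => 1)) ⬝ᵥ ((A ^ b).mulVec (fun _ => 1)) = Fw A (a + b) := by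
  rw [Matrix.dotProduct_mulVec, ← Matrix.mulVec_transpose, (hA.pow b : (A ^ b)ᵀ = A ^ b),
    Matrix.mulVec_mulVec, ← pow_add, add_comm b a, Fw, dotProduct_comm]

lemma Fw_even_nonneg (A : Matrix W W ℝ) (hA : A.IsSymm) (a : ℕ) : 0 ≤ Fw A (2 * a) := by
  rw [two_mul, ← dot_pow A hA a a, dotProduct]
  exact Finset.sum_nonneg fun u _ => mul_self_nonneg _

lemma Fw_sq_le (A : Matrix W W ℝ) (hA : A.IsSymm) (a b : ℕ) :
    Fw A (a + b) ^ 2 ≤ Fw A (2 * a) * Fw A (2 * b) := by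
  rw [← dot_pow A hA a b, two_mul, two_mul, ← dot_pow A hA a a, ← dot_pow A hA b b,
    dotProduct, dotProduct, dotProduct]
  simp only [← sq]
  exact Finset.sum_mul_sq_le_sq_mul_sq (ι := W) (R := ℝ) univ
    (fun u => (A ^ a).mulVec (fun _ => 1) u) (fun u => (A ^ b).mulVec (fun _ => 1) u)

lemma claim1 (A : Matrix W W ℝ) (hA : A.IsSymm) :
    ∀ j, Fw A (2*j) * Fw A 2 ≤ Fw A 0 * Fw A (2*(j+1)) := by
  intro j
  induction j with
  | zero => simp [mul_comm]
  | succ j ih =>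
    have hlc : Fw A (2*(j+1)) ^ 2 ≤ Fw A (2*j) * Fw A (2*(j+2)) := by
      have := Fw_sq_le A hA j (j+2)
      have e : j + (j + 2) = 2*(j+1) := by ring
      rwa [e] at this
    have h0 := Fw_even_nonneg A hA 0
    have h1 := Fw_even_nonneg A hA 1
    have h2 := Fw_even_nonneg A hA j
    have h3 := Fw_even_nonneg A hA (j+1)
    have h4 := Fw_even_nonneg A hA (j+2)
    have e1 : (2:ℕ) = 2*1 := rfl
    rw [e1] at *
    rcases eq_or_lt_of_le h3 with h|h
    · calc Fw A (2*(j+1)) * Fw A (2*1) = 0 := by rw [← h, zero_mul]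
        _ ≤ Fw A 0 * Fw A (2*(j+2)) := mul_nonneg h0 h4
    · rcases eq_or_lt_of_le h2 with h2'|h2'
      · exfalso
        have : Fw A (2*(j+1)) ^ 2 ≤ 0 := by rw [← h2', zero_mul] at hlc; exact hlc
        nlinarith
      · nlinarith [mul_le_mul_of_nonneg_left ih (le_of_lt h),
          mul_le_mul_of_nonneg_left hlc (le_of_lt h2'), mul_pos h2' h]

lemma claim2 (A : Matrix W W ℝ) (hA : A.IsSymm) :
    ∀ j, Fw A 2 ^ (j+1) * Fw A 0 ≤ Fw A 0 ^ (j+1) * Fw A (2*(j+1)) := by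
  intro j
  induction j with
  | zero => simpa [mul_comm] using le_refl (Fw A 2 * Fw A 0)
  | succ j ih =>
    have h1 : (0:ℝ) ≤ Fw A 2 := by simpa using Fw_even_nonneg A hA 1
    have h0 : (0:ℝ) ≤ Fw A 0 := by simpa using Fw_even_nonneg A hA 0
    have hc1 := claim1 A hA (j+1)
    calc Fw A 2 ^ (j+2) * Fw A 0 = Fw A 2 * (Fw A 2 ^ (j+1) * Fw A 0) := by ring
      _ ≤ Fw A 2 * (Fw A 0 ^ (j+1) * Fw A (2*(j+1))) := by
          exact mul_le_mul_of_nonneg_left ih h1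
      _ = Fw A 0 ^ (j+1) * (Fw A (2*(j+1)) * Fw A 2) := by ring
      _ ≤ Fw A 0 ^ (j+1) * (Fw A 0 * Fw A (2*(j+2))) := by
          exact mul_le_mul_of_nonneg_left hc1 (pow_nonneg h0 _)
      _ = Fw A 0 ^ (j+2) * Fw A (2*(j+2)) := by ring

lemma key_ineq (A : Matrix W W ℝ) (hA : A.IsSymm) (k : ℕ) (hk : 1 ≤ k) :
    Fw A 1 ^ (2*k) * Fw A 0 ≤ Fw A 0 ^ (2*k) * Fw A (2*k) := by
  obtain ⟨j, rfl⟩ : ∃ j, k = j + 1 := ⟨k - 1, (Nat.succ_pred_eq_of_pos hk).symm⟩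
  have h0 : (0:ℝ) ≤ Fw A 0 := by simpa using Fw_even_nonneg A hA 0
  have h2 : (0:ℝ) ≤ Fw A 2 := by simpa using Fw_even_nonneg A hA 1
  have hsq : Fw A 1 ^ 2 ≤ Fw A 0 * Fw A 2 := by
    have := Fw_sq_le A hA 0 1
    simpa using this
  calc Fw A 1 ^ (2*(j+1)) * Fw A 0 = (Fw A 1 ^ 2) ^ (j+1) * Fw A 0 := by
        rw [← pow_mul]
    _ ≤ (Fw A 0 * Fw A 2) ^ (j+1) * Fw A 0 := by
        exact mul_le_mul_of_nonneg_right (pow_le_pow_left₀ (sq_nonneg _) hsq _) h0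
    _ = Fw A 0 ^ (j+1) * (Fw A 2 ^ (j+1) * Fw A 0) := by ring
    _ ≤ Fw A 0 ^ (j+1) * (Fw A 0 ^ (j+1) * Fw A (2*(j+1))) := by
        exact mul_le_mul_of_nonneg_left (claim2 A hA j) (pow_nonneg h0 _)
    _ = Fw A 0 ^ (2*(j+1)) * Fw A (2*(j+1)) := by ring

lemma Fw_le_trace (A : Matrix W W ℝ) (hA : A.IsSymm) (k : ℕ) :
    Fw A (2*k) ≤ (Fintype.card W : ℝ) * (A^(2*k)).trace := by
  have hy : Fw A (2*k) = ∑ u : W, (∑ v : W, (A^k) u v)^2 := by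
    rw [two_mul, ← dot_pow A hA k k, dotProduct]
    apply Finset.sum_congr rfl
    intro u _
    rw [← sq]
    congr 1
    simp [Matrix.mulVec, dotProduct]
  have htr : (A^(2*k)).trace = ∑ u : W, ∑ v : W, ((A^k) u v)^2 := by
    rw [two_mul, pow_add, Matrix.trace]
    apply Finset.sum_congr rfl
    intro u _
    rw [Matrix.diag_apply, Matrix.mul_apply]
    apply Finset.sum_congr rfl
    intro v _
    rw [sq]
    congr 1
    conv_rhs => rw [← (hA.pow k : (A^k)ᵀ = A^k)]
    rw [Matrix.transpose_apply]
  rw [hy, htr, Finset.mul_sum]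
  apply Finset.sum_le_sum
  intro u _
  simpa using sq_sum_le_card_mul_sum_sq (s := (univ : Finset W)) (f := fun v => (A^k) u v)

lemma cyclic_iff_hom (H : SimpleGraph W) (m : ℕ) (f : Fin (m+2) → W) :
    (∀ ⦃u v : Fin (m+2)⦄, (SimpleGraph.cycleGraph (m+2)).Adj u v → H.Adj (f u) (f v))
      ↔ ∀ i : Fin (m+2), H.Adj (f i) (f (i+1)) := by
  constructor
  · intro h i
    apply h
    rw [SimpleGraph.cycleGraph_adj]
    right
    simp
  · intro h u v huv
    rw [SimpleGraph.cycleGraph_adj] at huv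
    rcases huv with h1 | h1
    · have : u = v + 1 := by rw [sub_eq_iff_eq_add] at h1; rw [h1]; exact add_comm _ _
      subst this
      exact (h v).symm
    · have : v = u + 1 := by rw [sub_eq_iff_eq_add] at h1; rw [h1]; exact add_comm _ _
      subst this
      exact h u

lemma prod_adj (H : SimpleGraph W) {m : ℕ} (f : Fin (m+1) → W) :
    ∏ i : Fin (m+1), (H.adjMatrix ℝ) (f i) (f (i+1))
      = if (∀ i : Fin (m+1), H.Adj (f i) (f (i+1))) then 1 else 0 := by
  by_cases h : ∀ i : Fin (m+1), H.Adj (f i) (f (i+1))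
  · rw [if_pos h]
    apply Finset.prod_eq_one
    intro i _
    simp [h i]
  · rw [if_neg h]
    push_neg at h
    obtain ⟨i, hi⟩ := h
    apply Finset.prod_eq_zero (mem_univ i)
    simp [hi]

lemma card_hom_cycle (H : SimpleGraph W) (m : ℕ) :
    ((Finset.univ.filter
      (fun f : Fin (m+2) → W => ∀ ⦃u v : Fin (m+2)⦄,
        (SimpleGraph.cycleGraph (m+2)).Adj u v → H.Adj (f u) (f v))).card : ℝ)
      = ((H.adjMatrix ℝ) ^ (m+2)).trace := by
  rw [show m+2 = (m+1)+1 from rfl, trace_pow_eq_sum, ← Finset.sum_boole]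
  apply Finset.sum_congr rfl
  intro f _
  rw [prod_adj H f]
  by_cases hcyc : ∀ i : Fin (m+2), H.Adj (f i) (f (i+1))
  · rw [if_pos ((cyclic_iff_hom H m f).mpr hcyc), if_pos hcyc]
  · rw [if_neg (fun hh => hcyc ((cyclic_iff_hom H m f).mp hh)), if_neg hcyc]

lemma card_hom_K2 (H : SimpleGraph W) :
    ((Finset.univ.filter
      (fun f : Fin 2 → W => ∀ ⦃u v : Fin 2⦄,
        (⊤ : SimpleGraph (Fin 2)).Adj u v → H.Adj (f u) (f v))).card : ℝ)
      = Fw (H.adjMatrix ℝ) 1 := by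
  have h1 : ∀ f : Fin 2 → W,
      (∀ ⦃u v : Fin 2⦄, (⊤ : SimpleGraph (Fin 2)).Adj u v → H.Adj (f u) (f v))
        ↔ H.Adj (f 0) (f 1) := by
    intro f
    constructor
    · intro h
      exact h (by simp : (⊤ : SimpleGraph (Fin 2)).Adj 0 1)
    · intro h u v huv
      have hne : u ≠ v := huv.ne
      fin_cases u <;> fin_cases v <;> simp_all <;> exact h.symm
  rw [← Finset.sum_boole, Fw, pow_one]
  have : (H.adjMatrix ℝ).mulVec (fun _ => 1) ⬝ᵥ (fun _ => 1)
      = ∑ u : W, ∑ v : W, if H.Adj u v then (1:ℝ) else 0 := by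
    simp [dotProduct, Matrix.mulVec]
  rw [this, ← Fintype.sum_prod_type',
    ← Fintype.sum_equiv (piFinTwoEquiv (fun _ => W))
      (fun f : Fin 2 → W => if H.Adj (f 0) (f 1) then (1:ℝ) else 0)
      (fun p : W × W => if H.Adj p.1 p.2 then (1:ℝ) else 0) (fun f => rfl)]
  apply Finset.sum_congr rfl
  intro f _
  congr 1
  exact propext (h1 f)

end EvenCycleSidorenko

open EvenCycleSidorenko Matrix in
/-- Every even cycle `C_{2k}`, `k ≥ 1`, is Sidorenko. -/
theorem even_cycle_sidorenko (k : ℕ) (hk : 1 ≤ k) {W : Type} [Fintype W] (H : SimpleGraph W) :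
    homDensity (SimpleGraph.cycleGraph (2 * k)) H
      ≥ homDensity (⊤ : SimpleGraph (Fin 2)) H ^ (2 * k) := by
  by_cases hW : Fintype.card W = 0
  · have h2k : (2*k) ≠ 0 := by omega
    unfold homDensity
    rw [hW]
    simp only [Fintype.card_fin, Nat.cast_zero]
    rw [zero_pow h2k, zero_pow (by norm_num : (2:ℕ) ≠ 0), div_zero, div_zero, zero_pow h2k]
  · obtain ⟨m, hm⟩ : ∃ m, 2 * k = m + 2 := ⟨2*k - 2, by omega⟩
    set A := H.adjMatrix ℝ with hAdef
    have hA : A.IsSymm := H.isSymm_adjMatrix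
    have hn : (0:ℝ) < (Fintype.card W : ℝ) :=
      Nat.cast_pos.mpr (Nat.pos_of_ne_zero hW)
    have hFw0 : Fw A 0 = (Fintype.card W : ℝ) := by
      simp [Fw, dotProduct, Matrix.one_mulVec]
    have key := key_ineq A hA k hk
    have hle := Fw_le_trace A hA k
    rw [hm] at key hle
    rw [hFw0] at key
    have hT : Fw A 1 ^ (m+2) * (Fintype.card W : ℝ)
        ≤ (Fintype.card W : ℝ)^(m+2) * ((Fintype.card W : ℝ) * (A^(m+2)).trace) :=
      key.trans (mul_le_mul_of_nonneg_left hle (by positivity))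
    rw [hm]
    have e1 : homDensity (SimpleGraph.cycleGraph (m+2)) H
        = (A^(m+2)).trace / (Fintype.card W : ℝ)^(m+2) := by
      unfold homDensity
      simp only [Fintype.card_fin]
      congr 1
      convert card_hom_cycle H m using 3
      congr!
    have e2 : homDensity (⊤ : SimpleGraph (Fin 2)) H
        = Fw A 1 / (Fintype.card W : ℝ)^2 := by
      unfold homDensity
      simp only [Fintype.card_fin]
      congr 1
      convert card_hom_K2 H using 3
      congr!
    rw [e1, e2, ge_iff_le, div_pow,
      div_le_div_iff₀ (by positivity) (by positivity)]
    calc Fw A 1 ^ (m+2) * (Fintype.card W : ℝ)^(m+2)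
        = (Fintype.card W : ℝ)^(m+1) * (Fw A 1 ^ (m+2) * (Fintype.card W : ℝ)) := by ring
      _ ≤ (Fintype.card W : ℝ)^(m+1)
            * ((Fintype.card W : ℝ)^(m+2) * ((Fintype.card W : ℝ) * (A^(m+2)).trace)) :=
          mul_le_mul_of_nonneg_left hT (by positivity)
      _ = (A^(m+2)).trace * (((Fintype.card W : ℝ))^2)^(m+2) := by ring
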